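/- arXiv:1005.2260 — 10 statements merged into one kernel-verified Lean document; each statement's English description precedes it below -/
import Mathlib

section
/- Let a > 0 be a real number and let k, d be nonnegative integers with d² + d ≤ 2k ≤ d² + 3d. Then (a,a)_{k+1} = d·a. (This computes the k-th ECH capacity of the ball B(a): c_k(B(a)) = d·a.) -/
open Finset

/-- `(a,b)_k`: the `k`-th smallest element, counted with multiplicity, of the
array `(a*m + b*n)_{(m,n) ∈ ℕ×ℕ}`; precisely, the infimum of all `L : ℝ` such
that the set `{(m,n) : a*m + b*n ≤ L}` has at least `k` elements. -/
noncomputable def echSeq (a b : ℝ) (k : ℕ) : ℝ :=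
  sInf {L : ℝ | k ≤ {p : ℕ × ℕ | a * p.1 + b * p.2 ≤ L}.ncard}


/-- The finset of pairs with sum at most `N`. -/
def triFinset (N : ℕ) : Finset (ℕ × ℕ) :=
  (range (N + 1)).biUnion Finset.HasAntidiagonal.antidiagonal

lemma triFinset_coe (N : ℕ) :
    (triFinset N : Set (ℕ × ℕ)) = {p : ℕ × ℕ | p.1 + p.2 ≤ N} := by
  ext p
  simp only [triFinset, Finset.coe_biUnion, Set.mem_iUnion, Finset.mem_coe,
    Finset.HasAntidiagonal.mem_antidiagonal, Finset.mem_range, Set.mem_setOf_eq]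
  constructor
  · rintro ⟨j, hj, rfl⟩; omega
  · intro h; exact ⟨p.1 + p.2, by omega, rfl⟩

lemma tri_finite (N : ℕ) : {p : ℕ × ℕ | p.1 + p.2 ≤ N}.Finite := by
  rw [← triFinset_coe]; exact Finset.finite_toSet _

lemma sum_succ_mul_two (m : ℕ) : (∑ j ∈ range m, (j + 1)) * 2 = m * (m + 1) := by
  induction m with
  | zero => simp
  | succ n ih => rw [Finset.sum_range_succ, add_mul, ih]; ring

lemma tri_card (N : ℕ) :
    {p : ℕ × ℕ | p.1 + p.2 ≤ N}.ncard * 2 = (N + 1) * (N + 2) := by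
  rw [← triFinset_coe, Set.ncard_coe_finset]
  have hc : (triFinset N).card = ∑ j ∈ range (N + 1), (j + 1) := by
    rw [triFinset, card_biUnion]
    · simp [Finset.Nat.card_antidiagonal]
    · intro i _ j _ hij
      simp only [Finset.disjoint_left, Finset.HasAntidiagonal.mem_antidiagonal]
      rintro ⟨x, y⟩ hx hy
      exact hij (hx ▸ hy ▸ rfl)
  rw [hc, sum_succ_mul_two]

/-- The ECH capacities of a ball: `c_k(B(a)) = (a,a)_{k+1} = d·a` where
`d² + d ≤ 2k ≤ d² + 3d`. -/
theorem ech_capacity_ball (a : ℝ) (ha : 0 < a) (k d : ℕ)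
    (h1 : d ^ 2 + d ≤ 2 * k) (h2 : 2 * k ≤ d ^ 2 + 3 * d) :
    echSeq a a (k + 1) = d * a := by
  set S : Set ℝ := {L : ℝ | k + 1 ≤ {p : ℕ × ℕ | a * p.1 + a * p.2 ≤ L}.ncard} with hS
  -- the set at level d*a is exactly the triangle of size d
  have hset_eq : {p : ℕ × ℕ | a * p.1 + a * p.2 ≤ (d : ℝ) * a}
      = {p : ℕ × ℕ | p.1 + p.2 ≤ d} := by
    ext ⟨m, n⟩
    simp only [Set.mem_setOf_eq]
    constructor
    · intro h
      have : ((m + n : ℕ) : ℝ) ≤ (d : ℝ) := by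
        push_cast
        nlinarith
      exact_mod_cast this
    · intro h
      have : ((m + n : ℕ) : ℝ) ≤ (d : ℝ) := by exact_mod_cast h
      push_cast at this
      nlinarith
  -- membership of d*a in S
  have hmem : (d : ℝ) * a ∈ S := by
    rw [hS, Set.mem_setOf_eq, hset_eq]
    have hc := tri_card d
    have hexp : (d + 1) * (d + 2) = d ^ 2 + 3 * d + 2 := by ring
    rw [hexp] at hc
    generalize hD : d ^ 2 = D at hc h1 h2
    omega
  -- anything below d*a is not in S
  have hlb : ∀ L ∈ S, (d : ℝ) * a ≤ L := by
    intro L hL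
    by_contra hcon
    push_neg at hcon
    rw [hS, Set.mem_setOf_eq] at hL
    rcases Nat.eq_zero_or_pos d with hd | hd
    · subst hd
      have hempty : {p : ℕ × ℕ | a * p.1 + a * p.2 ≤ L} = ∅ := by
        ext ⟨m, n⟩
        simp only [Set.mem_setOf_eq, Set.mem_empty_iff_false, iff_false, not_le]
        have hm : (0 : ℝ) ≤ a * m := by positivity
        have hn : (0 : ℝ) ≤ a * n := by positivity
        simp only [Nat.cast_zero, zero_mul] at hcon
        linarith
      rw [hempty] at hL
      simp at hL
    · obtain ⟨e, rfl⟩ : ∃ e, d = e + 1 := ⟨d - 1, by omega⟩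
      have hsub : {p : ℕ × ℕ | a * p.1 + a * p.2 ≤ L} ⊆ {p : ℕ × ℕ | p.1 + p.2 ≤ e} := by
        rintro ⟨m, n⟩ hp
        simp only [Set.mem_setOf_eq] at hp ⊢
        have hmn : ((m + n : ℕ) : ℝ) < ((e + 1 : ℕ) : ℝ) := by
          push_cast at hcon ⊢
          nlinarith
        have : m + n < e + 1 := by exact_mod_cast hmn
        omega
      have hle := Set.ncard_le_ncard hsub (tri_finite e)
      have hc := tri_card e
      have hexp : (e + 1) * (e + 2) = (e + 1) ^ 2 + (e + 1) := by ring
      rw [hexp] at hc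
      generalize hD : (e + 1) ^ 2 = D at hc h1 h2
      omega
  have : echSeq a a (k + 1) = sInf S := rfl
  rw [this]
  exact le_antisymm (csInf_le ⟨(d : ℝ) * a, hlb⟩ hmem) (le_csInf ⟨_, hmem⟩ hlb)
end

section
/- Let a ≥ b > 0 be real numbers. Then (a,b)_6 = 5b if a ≥ 5b; (a,b)_6 = a if 4b ≤ a ≤ 5b; (a,b)_6 = 4b if 3b ≤ a ≤ 4b; (a,b)_6 = a + b if 2b ≤ a ≤ 3b; (a,b)_6 = 3b if (3/2)b ≤ a ≤ 2b; and (a,b)_6 = 2a if b ≤ a ≤ (3/2)b. -/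
lemma echSeq_tfin (a b : ℝ) (hb : 0 < b) (hab : b ≤ a) (L : ℝ) :
    {p : ℕ × ℕ | a * p.1 + b * p.2 ≤ L}.Finite := by
  obtain ⟨N, hN⟩ := exists_nat_gt (L / b)
  apply Set.Finite.subset (Set.finite_Icc (0, 0) (N, N))
  rintro ⟨m, n⟩ hp
  simp only [Set.mem_setOf_eq] at hp
  have hm0 : (0:ℝ) ≤ (m:ℝ) := Nat.cast_nonneg m
  have hn0 : (0:ℝ) ≤ (n:ℝ) := Nat.cast_nonneg n
  have hbm : (m:ℝ) * b ≤ L := by nlinarith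
  have hbn : (n:ℝ) * b ≤ L := by nlinarith
  have hm : (m:ℝ) < N := lt_of_le_of_lt ((le_div_iff₀ hb).mpr hbm) hN
  have hn : (n:ℝ) < N := lt_of_le_of_lt ((le_div_iff₀ hb).mpr hbn) hN
  have hm' : m ≤ N := le_of_lt (by exact_mod_cast hm)
  have hn' : n ≤ N := le_of_lt (by exact_mod_cast hn)
  simp [Prod.le_def, hm', hn']

lemma echSeq_six_eq (a b L : ℝ) (hb : 0 < b) (hab : b ≤ a)
    (F G : Finset (ℕ × ℕ)) (hFc : 6 ≤ F.card) (hGc : G.card ≤ 5)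
    (hF : ∀ p ∈ F, a * p.1 + b * p.2 ≤ L)
    (hG : ∀ L' < L, ∀ p : ℕ × ℕ, a * p.1 + b * p.2 ≤ L' → p ∈ G) :
    echSeq a b 6 = L := by
  have hmem : L ∈ {L : ℝ | 6 ≤ {p : ℕ × ℕ | a * p.1 + b * p.2 ≤ L}.ncard} := by
    have hsub : ↑F ⊆ {p : ℕ × ℕ | a * p.1 + b * p.2 ≤ L} := fun p hp => hF p hp
    have : (↑F : Set (ℕ × ℕ)).ncard ≤ {p : ℕ × ℕ | a * p.1 + b * p.2 ≤ L}.ncard :=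
      Set.ncard_le_ncard hsub (echSeq_tfin a b hb hab L)
    rw [Set.ncard_coe_finset] at this
    exact le_trans hFc this
  have hlb : ∀ L' ∈ {L : ℝ | 6 ≤ {p : ℕ × ℕ | a * p.1 + b * p.2 ≤ L}.ncard}, L ≤ L' := by
    intro L' hL'
    by_contra h
    push_neg at h
    have hsub : {p : ℕ × ℕ | a * p.1 + b * p.2 ≤ L'} ⊆ ↑G :=
      fun p hp => hG L' h p hp
    have hc := Set.ncard_le_ncard hsub G.finite_toSet
    rw [Set.ncard_coe_finset] at hc
    have := hL'
    simp only [Set.mem_setOf_eq] at this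
    omega
  exact le_antisymm (csInf_le ⟨L, hlb⟩ hmem) (le_csInf ⟨L, hmem⟩ hlb)

/-- Computation of `(a,b)_6` for `a ≥ b > 0`. -/
theorem echSeq_six (a b : ℝ) (hb : 0 < b) (hab : b ≤ a) :
    (5 * b ≤ a → echSeq a b 6 = 5 * b) ∧
    (4 * b ≤ a → a ≤ 5 * b → echSeq a b 6 = a) ∧
    (3 * b ≤ a → a ≤ 4 * b → echSeq a b 6 = 4 * b) ∧
    (2 * b ≤ a → a ≤ 3 * b → echSeq a b 6 = a + b) ∧
    ((3 / 2) * b ≤ a → a ≤ 2 * b → echSeq a b 6 = 3 * b) ∧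
    (a ≤ (3 / 2) * b → echSeq a b 6 = 2 * a) := by
  refine ⟨?_, ?_, ?_, ?_, ?_, ?_⟩
  · -- a ≥ 5b : answer 5b
    intro h1
    apply echSeq_six_eq a b (5 * b) hb hab
      {(0,0),(0,1),(0,2),(0,3),(0,4),(0,5)} {(0,0),(0,1),(0,2),(0,3),(0,4)}
    · decide
    · decide
    · intro p hp; fin_cases hp <;> (push_cast; linarith)
    · rintro L' hL' ⟨m, n⟩ hp
      simp only [Set.mem_setOf_eq] at hp
      have hm0 : (0:ℝ) ≤ (m:ℝ) := Nat.cast_nonneg m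
      have hn0 : (0:ℝ) ≤ (n:ℝ) := Nat.cast_nonneg n
      have hm : m = 0 := by
        by_contra h
        have h1' : (1:ℝ) ≤ (m:ℝ) := by exact_mod_cast Nat.one_le_iff_ne_zero.mpr h
        nlinarith
      have hn : n ≤ 4 := by
        by_contra h
        push_neg at h
        have h5 : (5:ℝ) ≤ (n:ℝ) := by exact_mod_cast h
        nlinarith
      subst hm
      interval_cases n <;> decide
  · -- 4b ≤ a ≤ 5b : answer a
    intro h1 h2
    apply echSeq_six_eq a b a hb hab
      {(0,0),(0,1),(0,2),(0,3),(0,4),(1,0)} {(0,0),(0,1),(0,2),(0,3),(0,4)}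
    · decide
    · decide
    · intro p hp; fin_cases hp <;> (push_cast; linarith)
    · rintro L' hL' ⟨m, n⟩ hp
      simp only [Set.mem_setOf_eq] at hp
      have hm0 : (0:ℝ) ≤ (m:ℝ) := Nat.cast_nonneg m
      have hn0 : (0:ℝ) ≤ (n:ℝ) := Nat.cast_nonneg n
      have hm : m = 0 := by
        by_contra h
        have h1' : (1:ℝ) ≤ (m:ℝ) := by exact_mod_cast Nat.one_le_iff_ne_zero.mpr h
        nlinarith
      have hn : n ≤ 4 := by
        by_contra h
        push_neg at h
        have h5 : (5:ℝ) ≤ (n:ℝ) := by exact_mod_cast h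
        nlinarith
      subst hm
      interval_cases n <;> decide
  · -- 3b ≤ a ≤ 4b : answer 4b
    intro h1 h2
    apply echSeq_six_eq a b (4 * b) hb hab
      {(0,0),(0,1),(0,2),(0,3),(0,4),(1,0)} {(0,0),(0,1),(0,2),(0,3),(1,0)}
    · decide
    · decide
    · intro p hp; fin_cases hp <;> (push_cast; linarith)
    · rintro L' hL' ⟨m, n⟩ hp
      simp only [Set.mem_setOf_eq] at hp
      have hm0 : (0:ℝ) ≤ (m:ℝ) := Nat.cast_nonneg m
      have hn0 : (0:ℝ) ≤ (n:ℝ) := Nat.cast_nonneg n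
      have hm : m ≤ 1 := by
        by_contra h
        push_neg at h
        have h2' : (2:ℝ) ≤ (m:ℝ) := by exact_mod_cast h
        nlinarith
      interval_cases m
      · have hn : n ≤ 3 := by
          by_contra h
          push_neg at h
          have h4 : (4:ℝ) ≤ (n:ℝ) := by exact_mod_cast h
          push_cast at hp
          nlinarith
        interval_cases n <;> decide
      · have hn : n = 0 := by
          by_contra h
          have h1' : (1:ℝ) ≤ (n:ℝ) := by exact_mod_cast Nat.one_le_iff_ne_zero.mpr h
          push_cast at hp
          nlinarith
        subst hn; decide
  · -- 2b ≤ a ≤ 3b : answer a + b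
    intro h1 h2
    apply echSeq_six_eq a b (a + b) hb hab
      {(0,0),(0,1),(0,2),(0,3),(1,0),(1,1)} {(0,0),(0,1),(0,2),(0,3),(1,0)}
    · decide
    · decide
    · intro p hp; fin_cases hp <;> (push_cast; linarith)
    · rintro L' hL' ⟨m, n⟩ hp
      simp only [Set.mem_setOf_eq] at hp
      have hm0 : (0:ℝ) ≤ (m:ℝ) := Nat.cast_nonneg m
      have hn0 : (0:ℝ) ≤ (n:ℝ) := Nat.cast_nonneg n
      have hm : m ≤ 1 := by
        by_contra h
        push_neg at h
        have h2' : (2:ℝ) ≤ (m:ℝ) := by exact_mod_cast h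
        nlinarith
      interval_cases m
      · have hn : n ≤ 3 := by
          by_contra h
          push_neg at h
          have h4 : (4:ℝ) ≤ (n:ℝ) := by exact_mod_cast h
          push_cast at hp
          nlinarith
        interval_cases n <;> decide
      · have hn : n = 0 := by
          by_contra h
          have h1' : (1:ℝ) ≤ (n:ℝ) := by exact_mod_cast Nat.one_le_iff_ne_zero.mpr h
          push_cast at hp
          nlinarith
        subst hn; decide
  · -- 3/2 b ≤ a ≤ 2b : answer 3b
    intro h1 h2
    apply echSeq_six_eq a b (3 * b) hb hab
      {(0,0),(0,1),(0,2),(0,3),(1,0),(1,1)} {(0,0),(0,1),(0,2),(1,0),(1,1)}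
    · decide
    · decide
    · intro p hp; fin_cases hp <;> (push_cast; linarith)
    · rintro L' hL' ⟨m, n⟩ hp
      simp only [Set.mem_setOf_eq] at hp
      have hm0 : (0:ℝ) ≤ (m:ℝ) := Nat.cast_nonneg m
      have hn0 : (0:ℝ) ≤ (n:ℝ) := Nat.cast_nonneg n
      have hm : m ≤ 1 := by
        by_contra h
        push_neg at h
        have h2' : (2:ℝ) ≤ (m:ℝ) := by exact_mod_cast h
        nlinarith
      interval_cases m
      · have hn : n ≤ 2 := by
          by_contra h
          push_neg at h
          have h3 : (3:ℝ) ≤ (n:ℝ) := by exact_mod_cast h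
          push_cast at hp
          nlinarith
        interval_cases n <;> decide
      · have hn : n ≤ 1 := by
          by_contra h
          push_neg at h
          have h2' : (2:ℝ) ≤ (n:ℝ) := by exact_mod_cast h
          push_cast at hp
          nlinarith
        interval_cases n <;> decide
  · -- b ≤ a ≤ 3/2 b : answer 2a
    intro h2
    apply echSeq_six_eq a b (2 * a) hb hab
      {(0,0),(0,1),(0,2),(1,0),(1,1),(2,0)} {(0,0),(0,1),(0,2),(1,0),(1,1)}
    · decide
    · decide
    · intro p hp; fin_cases hp <;> (push_cast; linarith)
    · rintro L' hL' ⟨m, n⟩ hp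
      simp only [Set.mem_setOf_eq] at hp
      have hm0 : (0:ℝ) ≤ (m:ℝ) := Nat.cast_nonneg m
      have hn0 : (0:ℝ) ≤ (n:ℝ) := Nat.cast_nonneg n
      have hm : m ≤ 1 := by
        by_contra h
        push_neg at h
        have h2' : (2:ℝ) ≤ (m:ℝ) := by exact_mod_cast h
        nlinarith
      interval_cases m
      · have hn : n ≤ 2 := by
          by_contra h
          push_neg at h
          have h3 : (3:ℝ) ≤ (n:ℝ) := by exact_mod_cast h
          push_cast at hp
          nlinarith
        interval_cases n <;> decide
      · have hn : n ≤ 1 := by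
          by_contra h
          push_neg at h
          have h2' : (2:ℝ) ≤ (n:ℝ) := by exact_mod_cast h
          push_cast at hp
          nlinarith
        interval_cases n <;> decide
end

section
/- Let a, b > 0 be real numbers. Then lim_{k→∞} ((a,b)_k)² / k = 2ab. (This says that the asymptotics of the ECH capacities of the ellipsoid E(a,b) recover its symplectic volume ab/2, i.e. lim_{k→∞} c_k(E(a,b))²/k = 4·vol(E(a,b)).) -/
open Filter

private lemma ech_set_eq (a b L : ℝ) (ha : 0 < a) (hb : 0 < b) (hL : 0 ≤ L) :
    {p : ℕ × ℕ | a * p.1 + b * p.2 ≤ L} =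
      ↑((Finset.range (⌊L/a⌋₊ + 1)).biUnion
        (fun m => (Finset.range (⌊(L - a*m)/b⌋₊ + 1)).image (fun n => (m, n)))) := by
  ext ⟨m, n⟩
  simp only [Set.mem_setOf_eq, Finset.coe_biUnion, Set.mem_iUnion, Finset.mem_coe,
    Finset.mem_range, Finset.mem_image]
  constructor
  · intro h
    have hm0 : a * m ≤ L := by nlinarith [Nat.cast_nonneg (α := ℝ) n]
    refine ⟨m, ?_, n, ?_, rfl⟩
    · refine Nat.lt_succ_of_le (Nat.le_floor ?_)
      rw [le_div_iff₀ ha]; linarith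
    · refine Nat.lt_succ_of_le (Nat.le_floor ?_)
      rw [le_div_iff₀ hb]; linarith
  · rintro ⟨m', hm', n', hn', he⟩
    obtain ⟨rfl, rfl⟩ := Prod.mk.injEq .. ▸ he
    have hm1 : (m' : ℝ) ≤ L / a := le_trans
      (by exact_mod_cast Nat.le_of_lt_succ hm') (Nat.floor_le (by positivity))
    have hm2 : a * m' ≤ L := by rw [le_div_iff₀ ha] at hm1; linarith
    have hn1 : (n' : ℝ) ≤ (L - a * m') / b := le_trans
      (by exact_mod_cast Nat.le_of_lt_succ hn') (Nat.floor_le (by apply div_nonneg <;> linarith))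
    rw [le_div_iff₀ hb] at hn1
    show a * (m' : ℝ) + b * (n' : ℝ) ≤ L
    linarith

private lemma ech_card (a b L : ℝ) (ha : 0 < a) (hb : 0 < b) (hL : 0 ≤ L) :
    ({p : ℕ × ℕ | a * p.1 + b * p.2 ≤ L}.ncard : ℝ)
      = ∑ m ∈ Finset.range (⌊L/a⌋₊ + 1), ((⌊(L - a*m)/b⌋₊ : ℝ) + 1) := by
  rw [ech_set_eq a b L ha hb hL, Set.ncard_coe_finset]
  rw [Finset.card_biUnion]
  · push_cast
    refine Finset.sum_congr rfl fun m _ => ?_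
    rw [Finset.card_image_of_injective _ (fun x y h => by simpa using congrArg Prod.snd h)]
    simp
  · intro x _ y _ hxy
    simp only [Finset.disjoint_left, Finset.mem_image]
    rintro p ⟨n1, _, rfl⟩ ⟨n2, _, h⟩
    exact hxy (congrArg Prod.fst h).symm

private lemma ech_sum_bounds (a b L : ℝ) (ha : 0 < a) (hb : 0 < b) (hL : 0 ≤ L) :
    L^2/(2*a*b) ≤ ∑ m ∈ Finset.range (⌊L/a⌋₊ + 1), ((⌊(L - a*m)/b⌋₊ : ℝ) + 1) ∧
    ∑ m ∈ Finset.range (⌊L/a⌋₊ + 1), ((⌊(L - a*m)/b⌋₊ : ℝ) + 1) ≤ (L+a+b)^2/(2*a*b) := by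
  set M := ⌊L/a⌋₊ with hM
  have hM1 : a * M ≤ L := by
    have := Nat.floor_le (div_nonneg hL ha.le)
    rw [← hM] at this; rw [mul_comm]; exact (le_div_iff₀ ha).mp this
  have hM2 : L < a * (M + 1) := by
    have := Nat.lt_floor_add_one (L/a)
    rw [← hM] at this
    have := (div_lt_iff₀ ha).mp this
    push_cast at this ⊢; linarith
  have hgauss : (∑ m ∈ Finset.range (M+1), (m:ℝ)) = (M+1)*M/2 := by
    have h : (∑ i ∈ Finset.range (M+1), i) * 2 = (M+1) * M := by
      simpa using Finset.sum_range_id_mul_two (M+1)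
    have h2 := congrArg (Nat.cast : ℕ → ℝ) h
    push_cast at h2
    linarith
  have hlow : ∀ m ∈ Finset.range (M+1), (L - a*m)/b ≤ (⌊(L - a*m)/b⌋₊ : ℝ) + 1 :=
    fun m _ => (Nat.lt_floor_add_one _).le
  have hup : ∀ m ∈ Finset.range (M+1), (⌊(L - a*m)/b⌋₊ : ℝ) + 1 ≤ (L - a*m)/b + 1 := by
    intro m hm
    have hm' : (m:ℝ) ≤ M := by exact_mod_cast Nat.le_of_lt_succ (Finset.mem_range.mp hm)
    have : 0 ≤ (L - a*m)/b := by
      apply div_nonneg _ hb.le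
      nlinarith
    linarith [Nat.floor_le this]
  have hsum1 : (∑ m ∈ Finset.range (M+1), (L - a*m)/b)
      ≤ ∑ m ∈ Finset.range (M+1), ((⌊(L - a*m)/b⌋₊ : ℝ) + 1) :=
    Finset.sum_le_sum hlow
  have hsum2 : (∑ m ∈ Finset.range (M+1), ((⌊(L - a*m)/b⌋₊ : ℝ) + 1))
      ≤ ∑ m ∈ Finset.range (M+1), ((L - a*m)/b + 1) :=
    Finset.sum_le_sum hup
  have hval : (∑ m ∈ Finset.range (M+1), (L - a*m)/b)
      = ((M+1)*L - a*((M+1)*M/2))/b := by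
    rw [← Finset.sum_div]
    congr 1
    rw [Finset.sum_sub_distrib, Finset.sum_const, ← Finset.mul_sum, hgauss,
      Finset.card_range]
    push_cast
    ring
  have hval2 : (∑ m ∈ Finset.range (M+1), ((L - a*m)/b + 1))
      = ((M+1)*L - a*((M+1)*M/2))/b + (M+1) := by
    rw [Finset.sum_add_distrib, hval, Finset.sum_const, Finset.card_range]
    push_cast; ring
  have key0 : (L - a*M)^2 ≤ a*(L - a*M) := by nlinarith
  constructor
  · refine le_trans ?_ hsum1
    rw [hval, div_le_div_iff₀ (by positivity) hb]
    have key2 : L^2 ≤ a*(M+1)*(2*L - a*M) := by nlinarith [sq_nonneg (L - a*M)]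
    nlinarith [mul_le_mul_of_nonneg_right key2 hb.le]
  · refine le_trans hsum2 ?_
    rw [hval2, div_add' _ _ _ hb.ne', div_le_div_iff₀ hb (by positivity)]
    have key3 : a*(M+1)*(2*L - a*M) + 2*b*(a*(M+1)) ≤ (L+a+b)^2 := by
      nlinarith [sq_nonneg (L - a*M), mul_pos ha hb, mul_nonneg hL ha.le,
        mul_nonneg hL hb.le, mul_nonneg hb.le (sub_nonneg.2 hM1)]
    nlinarith [mul_le_mul_of_nonneg_right key3 hb.le]

private lemma ech_count_lower (a b L : ℝ) (ha : 0 < a) (hb : 0 < b) (hL : 0 ≤ L) :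
    L^2/(2*a*b) ≤ ({p : ℕ × ℕ | a * p.1 + b * p.2 ≤ L}.ncard : ℝ) := by
  rw [ech_card a b L ha hb hL]
  exact (ech_sum_bounds a b L ha hb hL).1

private lemma ech_count_upper (a b L : ℝ) (ha : 0 < a) (hb : 0 < b) (hL : 0 ≤ L) :
    ({p : ℕ × ℕ | a * p.1 + b * p.2 ≤ L}.ncard : ℝ) ≤ (L+a+b)^2/(2*a*b) := by
  rw [ech_card a b L ha hb hL]
  exact (ech_sum_bounds a b L ha hb hL).2

/-- The asymptotics of the ECH capacities of the ellipsoid `E(a,b)` recover its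
symplectic volume: `lim_{k→∞} (a,b)_k² / k = 2ab`. -/
theorem echSeq_sq_div_tendsto (a b : ℝ) (ha : 0 < a) (hb : 0 < b) :
    Tendsto (fun k : ℕ => (echSeq a b k) ^ 2 / k) atTop (nhds (2 * a * b)) := by
  have hab : (0:ℝ) < 2*a*b := by positivity
  -- basic facts about the sets S_k for k ≥ 1
  have hmemL : ∀ k : ℕ, ∀ L ∈ {L : ℝ | k ≤ {p : ℕ × ℕ | a * p.1 + b * p.2 ≤ L}.ncard},
      1 ≤ k → 0 ≤ L := by
    intro k L hLmem hk
    by_contra hneg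
    push_neg at hneg
    have : {p : ℕ × ℕ | a * p.1 + b * p.2 ≤ L} = ∅ := by
      ext ⟨m, n⟩
      simp only [Set.mem_setOf_eq, Set.mem_empty_iff_false, iff_false, not_le]
      have : (0:ℝ) ≤ a * m + b * n := by positivity
      linarith
    rw [Set.mem_setOf_eq, this, Set.ncard_empty] at hLmem
    omega
  have hne : ∀ k : ℕ, (Real.sqrt (2*a*b*k)) ∈
      {L : ℝ | k ≤ {p : ℕ × ℕ | a * p.1 + b * p.2 ≤ L}.ncard} := by
    intro k
    have hknn : (0:ℝ) ≤ 2*a*b*k := by positivity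
    have hsq : (0:ℝ) ≤ Real.sqrt (2*a*b*k) := Real.sqrt_nonneg _
    have hlow := ech_count_lower a b _ ha hb hsq
    rw [Real.sq_sqrt hknn] at hlow
    have : (k:ℝ) ≤ ({p : ℕ × ℕ | a * p.1 + b * p.2 ≤ Real.sqrt (2*a*b*k)}.ncard : ℝ) := by
      calc (k:ℝ) = 2*a*b*k/(2*a*b) := by field_simp
        _ ≤ _ := hlow
    exact_mod_cast this
  have hbdd : ∀ k : ℕ, 1 ≤ k → BddBelow
      {L : ℝ | k ≤ {p : ℕ × ℕ | a * p.1 + b * p.2 ≤ L}.ncard} :=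
    fun k hk => ⟨0, fun L hL => hmemL k L hL hk⟩
  -- bounds on echSeq
  have hub : ∀ k : ℕ, 1 ≤ k → echSeq a b k ≤ Real.sqrt (2*a*b*k) := by
    intro k hk
    exact csInf_le (hbdd k hk) (hne k)
  have hnn : ∀ k : ℕ, 1 ≤ k → 0 ≤ echSeq a b k := by
    intro k hk
    exact le_csInf ⟨_, hne k⟩ (fun L hL => hmemL k L hL hk)
  have hlb : ∀ k : ℕ, 1 ≤ k → Real.sqrt (2*a*b*k) - (a+b) ≤ echSeq a b k := by
    intro k hk
    refine le_csInf ⟨_, hne k⟩ (fun L hL => ?_)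
    have hL0 : 0 ≤ L := hmemL k L hL hk
    have hupper := ech_count_upper a b L ha hb hL0
    rw [Set.mem_setOf_eq] at hL
    have hkL : (k:ℝ) ≤ ({p : ℕ × ℕ | a * p.1 + b * p.2 ≤ L}.ncard : ℝ) := by exact_mod_cast hL
    have h1 : 2*a*b*k ≤ (L+a+b)^2 := by
      have := hkL.trans hupper
      rw [le_div_iff₀ hab] at this
      linarith
    have h2 : Real.sqrt (2*a*b*k) ≤ L+a+b := by
      calc Real.sqrt (2*a*b*k) ≤ Real.sqrt ((L+a+b)^2) := Real.sqrt_le_sqrt h1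
        _ = L+a+b := Real.sqrt_sq (by linarith)
    linarith
  -- squeeze
  have hupper_ev : ∀ᶠ k : ℕ in atTop, (echSeq a b k)^2 / k ≤ 2*a*b := by
    filter_upwards [eventually_ge_atTop 1] with k hk
    have hk0 : (0:ℝ) < k := by exact_mod_cast hk
    rw [div_le_iff₀ hk0]
    have h1 : (echSeq a b k)^2 ≤ (Real.sqrt (2*a*b*k))^2 :=
      pow_le_pow_left₀ (hnn k hk) (hub k hk) 2
    rw [Real.sq_sqrt (by positivity)] at h1
    linarith
  have hlower_ev : ∀ᶠ k : ℕ in atTop,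
      (Real.sqrt (2*a*b) - (a+b)/Real.sqrt k)^2 ≤ (echSeq a b k)^2 / k := by
    filter_upwards [eventually_ge_atTop 1, eventually_ge_atTop ⌈(a+b)^2/(2*a*b)⌉₊]
      with k hk hk2
    have hk0 : (0:ℝ) < k := by exact_mod_cast hk
    have hsk : (0:ℝ) < Real.sqrt k := Real.sqrt_pos.2 hk0
    have hk2' : (a+b)^2/(2*a*b) ≤ (k:ℝ) := le_trans (Nat.le_ceil _) (by exact_mod_cast hk2)
    have hk3 : (a+b)^2 ≤ 2*a*b*k := by
      rw [div_le_iff₀ hab] at hk2'; linarith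
    have hab2 : a + b ≤ Real.sqrt (2*a*b*k) := by
      calc a + b = Real.sqrt ((a+b)^2) := (Real.sqrt_sq (by linarith)).symm
        _ ≤ _ := Real.sqrt_le_sqrt hk3
    have hc := hlb k hk
    have hcnn : 0 ≤ Real.sqrt (2*a*b*k) - (a+b) := by linarith
    have h1 : (Real.sqrt (2*a*b*k) - (a+b))^2 ≤ (echSeq a b k)^2 :=
      pow_le_pow_left₀ hcnn hc 2
    have hdecomp : Real.sqrt (2*a*b*k) = Real.sqrt (2*a*b) * Real.sqrt k := by
      rw [← Real.sqrt_mul (by positivity)]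
    have h2 : (Real.sqrt (2*a*b) - (a+b)/Real.sqrt k)^2
        = (Real.sqrt (2*a*b*k) - (a+b))^2 / k := by
      have he : Real.sqrt (2*a*b) - (a+b)/Real.sqrt k
          = (Real.sqrt (2*a*b*k) - (a+b))/Real.sqrt k := by
        rw [hdecomp]
        field_simp
      rw [he, div_pow, Real.sq_sqrt hk0.le]
    rw [h2]
    gcongr
  have hlim : Tendsto (fun k : ℕ => (Real.sqrt (2*a*b) - (a+b)/Real.sqrt k)^2)
      atTop (nhds (2*a*b)) := by
    have h1 : Tendsto (fun k : ℕ => Real.sqrt (k:ℝ)) atTop atTop := by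
      apply Filter.tendsto_atTop_atTop.2
      intro C
      refine ⟨⌈C⌉₊^2, fun k hk => ?_⟩
      have hcast : ((⌈C⌉₊:ℝ))^2 ≤ (k:ℝ) := by exact_mod_cast hk
      calc C ≤ (⌈C⌉₊:ℝ) := Nat.le_ceil C
        _ = Real.sqrt ((⌈C⌉₊:ℝ)^2) := (Real.sqrt_sq (Nat.cast_nonneg _)).symm
        _ ≤ Real.sqrt k := Real.sqrt_le_sqrt hcast
    have h2 : Tendsto (fun k : ℕ => (a+b)/Real.sqrt k) atTop (nhds 0) :=
      tendsto_const_nhds.div_atTop h1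
    have h3 : Tendsto (fun k : ℕ => Real.sqrt (2*a*b) - (a+b)/Real.sqrt k)
        atTop (nhds (Real.sqrt (2*a*b))) := by
      simpa using tendsto_const_nhds.sub h2
    have h4 := h3.pow 2
    rwa [Real.sq_sqrt hab.le] at h4
  exact tendsto_of_tendsto_of_tendsto_of_le_of_le' hlim tendsto_const_nhds hlower_ev hupper_ev
end

section
/- For every nonnegative integer k, min { m + n | (m,n) ∈ ℕ×ℕ, (m+1)(n+1) ≥ k+1 } = (1,2)_{k+1}. (This says that the polydisk P(1,1) and the ellipsoid E(1,2) have the same ECH capacities, namely 0,1,2,2,3,3,4,4,4,5,5,5,…) -/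
namespace PEaux

/-- `f d = ⌊(d+2)²/4⌋`. -/
def f (d : ℕ) : ℕ := (d + 2) ^ 2 / 4

lemma prod_le_f (m n : ℕ) : (m + 1) * (n + 1) ≤ f (m + n) := by
  have h : (m + 1) * (n + 1) * 4 ≤ (m + n + 2) ^ 2 := by
    have hz : ((m : ℤ) + 1) * (n + 1) * 4 ≤ ((m : ℤ) + n + 2) ^ 2 := by
      nlinarith [sq_nonneg ((m : ℤ) - n)]
    exact_mod_cast hz
  exact (Nat.le_div_iff_mul_le (by norm_num)).2 h

lemma f_eq (d : ℕ) : f d = (d / 2 + 1) * (d / 2 + d % 2 + 1) := by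
  rcases Nat.even_or_odd d with ⟨q, rfl⟩ | ⟨q, rfl⟩
  · have h1 : (q + q) / 2 = q := by omega
    have h2 : (q + q) % 2 = 0 := by omega
    rw [f, h1, h2]
    have h3 : (q + q + 2) ^ 2 = (q + 1) * (q + 0 + 1) * 4 := by ring
    rw [h3, Nat.mul_div_cancel _ (by norm_num)]
  · have h1 : (2 * q + 1) / 2 = q := by omega
    have h2 : (2 * q + 1) % 2 = 1 := by omega
    rw [f, h1, h2]
    have h3 : (2 * q + 1 + 2) ^ 2 = 4 * ((q + 1) * (q + 1 + 1)) + 1 := by ring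
    rw [h3, Nat.mul_add_div (by norm_num)]
    norm_num

lemma exists_split (d : ℕ) : ∃ m n : ℕ, m + n = d ∧ (m + 1) * (n + 1) = f d := by
  refine ⟨d / 2, d / 2 + d % 2, by omega, ?_⟩
  rw [f_eq]

lemma f_mono : Monotone f := fun a b h =>
  Nat.div_le_div_right (Nat.pow_le_pow_left (by omega) 2)

lemma sum_aux (r q : ℕ) :
    ∑ i ∈ Finset.range (q + 1), (r + 2 * i + 1) = (q + 1) * (q + r + 1) := by
  induction q with
  | zero => simp
  | succ n ih => rw [Finset.sum_range_succ, ih]; ring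

/-- The finite enumeration of `{p | p.1 + 2 p.2 ≤ d}`. -/
def T (d : ℕ) : Finset (ℕ × ℕ) :=
  (Finset.range (d / 2 + 1)).biUnion
    (fun i => (Finset.range (d % 2 + 2 * i + 1)).image (fun s => (s, d / 2 - i)))

lemma coe_T (d : ℕ) : (T d : Set (ℕ × ℕ)) = {p : ℕ × ℕ | p.1 + 2 * p.2 ≤ d} := by
  ext ⟨a, b⟩
  simp only [T, Finset.coe_biUnion, Finset.mem_coe, Finset.mem_range, Set.mem_iUnion,
    Finset.mem_image, Prod.mk.injEq, Set.mem_setOf_eq]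
  constructor
  · rintro ⟨i, hi, s, hs, rfl, rfl⟩
    omega
  · intro h
    exact ⟨d / 2 - b, by omega, a, by omega, rfl, by omega⟩

lemma card_T (d : ℕ) : (T d).card = f d := by
  rw [T, Finset.card_biUnion]
  · have himg : ∀ i ∈ Finset.range (d / 2 + 1),
        ((Finset.range (d % 2 + 2 * i + 1)).image (fun s => (s, d / 2 - i))).card
          = d % 2 + 2 * i + 1 := by
      intro i _
      rw [Finset.card_image_of_injective _ (fun a b hab => by
          simpa using congrArg Prod.fst hab), Finset.card_range]
    rw [Finset.sum_congr rfl himg, sum_aux, f_eq]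
  · intro i hi j hj hij
    simp only [Finset.mem_coe, Finset.mem_range] at hi hj
    simp only [Function.onFun, Finset.disjoint_left, Finset.mem_image, Finset.mem_range]
    rintro ⟨a, b⟩ ⟨s, hs, h1⟩ ⟨t, ht, h2⟩
    simp only [Prod.mk.injEq] at h1 h2
    omega

lemma ncard_nat (d : ℕ) : {p : ℕ × ℕ | p.1 + 2 * p.2 ≤ d}.ncard = f d := by
  rw [← coe_T, Set.ncard_coe_finset, card_T]

lemma finite_nat (d : ℕ) : {p : ℕ × ℕ | p.1 + 2 * p.2 ≤ d}.Finite := by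
  rw [← coe_T]; exact (T d).finite_toSet

lemma set_real_eq (L : ℝ) (hL : 0 ≤ L) :
    {p : ℕ × ℕ | (p.1 : ℝ) + 2 * (p.2 : ℝ) ≤ L}
      = {p : ℕ × ℕ | p.1 + 2 * p.2 ≤ ⌊L⌋₊} := by
  ext p
  simp only [Set.mem_setOf_eq]
  constructor
  · intro h
    exact Nat.le_floor (by push_cast; linarith)
  · intro h
    have h' : ((p.1 + 2 * p.2 : ℕ) : ℝ) ≤ (⌊L⌋₊ : ℝ) := Nat.cast_le.2 h
    have hfl := Nat.floor_le hL
    push_cast at h'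
    linarith

lemma ncard_real (L : ℝ) (hL : 0 ≤ L) :
    {p : ℕ × ℕ | (p.1 : ℝ) + 2 * (p.2 : ℝ) ≤ L}.ncard = f ⌊L⌋₊ := by
  rw [set_real_eq L hL, ncard_nat]

end PEaux

open PEaux in
/-- The polydisk `P(1,1)` and the ellipsoid `E(1,2)` have the same ECH
capacities: for every `k ∈ ℕ`,
`min { m + n | (m+1)(n+1) ≥ k+1 } = (1,2)_{k+1}`. -/
theorem polydisk_ellipsoid_same_capacities (k : ℕ) :
    ((sInf {s : ℕ | ∃ m n : ℕ, s = m + n ∧ k + 1 ≤ (m + 1) * (n + 1)} : ℕ) : ℝ) =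
      echSeq 1 2 (k + 1) := by
  set A := {s : ℕ | ∃ m n : ℕ, s = m + n ∧ k + 1 ≤ (m + 1) * (n + 1)} with hA
  have hAne : A.Nonempty := ⟨k, k, 0, by simp, by simp⟩
  have hd0mem := Nat.sInf_mem hAne
  set d₀ := sInf A with hd₀
  have hfd0 : k + 1 ≤ f d₀ := by
    obtain ⟨m, n, h1, h2⟩ := hd0mem
    calc k + 1 ≤ (m + 1) * (n + 1) := h2
      _ ≤ f (m + n) := prod_le_f m n
      _ = f d₀ := by rw [← h1]
  have hmin : ∀ d, d < d₀ → f d ≤ k := by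
    intro d hd
    by_contra hcon
    push_neg at hcon
    obtain ⟨m, n, hmn, hprod⟩ := exists_split d
    have : d ∈ A := ⟨m, n, hmn.symm, by omega⟩
    exact absurd (Nat.sInf_le this) (by omega)
  -- now compute echSeq 1 2 (k+1)
  rw [echSeq]
  simp only [one_mul]
  set B := {L : ℝ | k + 1 ≤ {p : ℕ × ℕ | (p.1 : ℝ) + 2 * (p.2 : ℝ) ≤ L}.ncard} with hB
  have hmemB : (d₀ : ℝ) ∈ B := by
    have hnc : {p : ℕ × ℕ | (p.1 : ℝ) + 2 * (p.2 : ℝ) ≤ ((d₀ : ℕ) : ℝ)}.ncard = f d₀ := by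
      rw [ncard_real _ (by positivity), Nat.floor_natCast]
    rw [hB, Set.mem_setOf_eq, hnc]
    exact hfd0
  have hlb : ∀ L ∈ B, (d₀ : ℝ) ≤ L := by
    intro L hL
    by_contra hcon
    push_neg at hcon
    rcases le_or_gt 0 L with h0 | h0
    · have hcard : {p : ℕ × ℕ | (p.1 : ℝ) + 2 * (p.2 : ℝ) ≤ L}.ncard = f ⌊L⌋₊ :=
        ncard_real L h0
      have hfloor : ⌊L⌋₊ < d₀ := by
        exact_mod_cast (Nat.floor_le h0).trans_lt hcon
      have := hmin _ hfloor
      rw [hB, Set.mem_setOf_eq, hcard] at hL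
      omega
    · have : {p : ℕ × ℕ | (p.1 : ℝ) + 2 * (p.2 : ℝ) ≤ L} = ∅ := by
        ext p
        simp only [Set.mem_setOf_eq, Set.mem_empty_iff_false, iff_false, not_le]
        have : (0 : ℝ) ≤ (p.1 : ℝ) + 2 * p.2 := by positivity
        linarith
      rw [hB, Set.mem_setOf_eq, this, Set.ncard_empty] at hL
      omega
  have hBdd : BddBelow B := ⟨(d₀ : ℝ), fun L hL => hlb L hL⟩
  have hBne : B.Nonempty := ⟨(d₀ : ℝ), hmemB⟩
  exact le_antisymm (le_csInf hBne hlb) (csInf_le hBdd hmemB)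
end

section
/- Let a, b > 0 be real numbers, and for each nonnegative integer k set p_k := min { a·m + b·n | (m,n) ∈ ℕ×ℕ, (m+1)(n+1) ≥ k+1 }. Then lim_{k→∞} p_k² / k = 4ab. (This verifies the volume conjecture for the polydisk P(a,b): the k-th ECH capacity c_k(P(a,b)) equals p_k and lim_{k→∞} c_k(P(a,b))²/k = 4·vol(P(a,b)) = 4ab.) -/
open Filter

private lemma two_sqrt_mul_le {x y : ℝ} (hx : 0 ≤ x) (hy : 0 ≤ y) :
    2 * Real.sqrt (x * y) ≤ x + y := by
  rw [Real.sqrt_mul hx]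
  nlinarith [sq_nonneg (Real.sqrt x - Real.sqrt y), Real.sq_sqrt hx, Real.sq_sqrt hy,
    Real.sqrt_nonneg x, Real.sqrt_nonneg y]

private lemma sqrt_nat_atTop : Tendsto (fun k : ℕ => Real.sqrt k) atTop atTop := by
  apply tendsto_atTop_atTop.2
  intro B
  refine ⟨⌈B ^ 2⌉₊, fun k hk => ?_⟩
  have h1 : (B ^ 2 : ℝ) ≤ k := (Nat.le_ceil _).trans (by exact_mod_cast hk)
  calc B ≤ |B| := le_abs_self B
    _ = Real.sqrt (B ^ 2) := (Real.sqrt_sq_eq_abs B).symm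
    _ ≤ Real.sqrt k := Real.sqrt_le_sqrt h1

private lemma ratio_sqrt_lim : Tendsto (fun k : ℕ => Real.sqrt ((k : ℝ) + 1) / Real.sqrt k)
    atTop (nhds 1) := by
  have h1 : Tendsto (fun k : ℕ => (1 : ℝ) + 1 / k) atTop (nhds 1) := by
    have h0 : Tendsto (fun _ : ℕ => (1:ℝ)) atTop (nhds 1) := tendsto_const_nhds
    simpa using h0.add tendsto_one_div_atTop_nhds_zero_nat
  have h2 := h1.sqrt
  rw [show Real.sqrt 1 = 1 by simp] at h2
  apply h2.congr'
  filter_upwards [eventually_ge_atTop 1] with k hk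
  have hk0 : (0:ℝ) < k := by exact_mod_cast hk
  rw [show (1 : ℝ) + 1 / k = ((k : ℝ) + 1) / k by field_simp,
    Real.sqrt_div (by positivity)]

/-- The volume conjecture for the polydisk `P(a,b)`: with
`p_k = min { a·m + b·n | (m+1)(n+1) ≥ k+1 }` (the `k`-th ECH capacity of
`P(a,b)`), we have `lim_{k→∞} p_k² / k = 4ab`. -/
theorem polydisk_volume (a b : ℝ) (ha : 0 < a) (hb : 0 < b)
    (p : ℕ → ℝ)
    (hp : ∀ k : ℕ, p k =
      sInf {x : ℝ | ∃ m n : ℕ, x = a * m + b * n ∧ k + 1 ≤ (m + 1) * (n + 1)}) :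
    Tendsto (fun k : ℕ => (p k) ^ 2 / k) atTop (nhds (4 * a * b)) := by
  set s := Real.sqrt (a * b) with hs
  have hab : (0:ℝ) ≤ a * b := by positivity
  have hs2 : s ^ 2 = a * b := Real.sq_sqrt hab
  have hsnn : 0 ≤ s := Real.sqrt_nonneg _
  set c := a + b with hc
  -- nonempty and bddBelow
  have hne : ∀ k : ℕ, Set.Nonempty
      {x : ℝ | ∃ m n : ℕ, x = a * m + b * n ∧ k + 1 ≤ (m + 1) * (n + 1)} := by
    intro k
    exact ⟨a * k + b * 0, k, 0, by norm_num, by simp⟩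
  have hbdd : ∀ k : ℕ, BddBelow
      {x : ℝ | ∃ m n : ℕ, x = a * m + b * n ∧ k + 1 ≤ (m + 1) * (n + 1)} := by
    intro k
    refine ⟨0, fun x hx => ?_⟩
    obtain ⟨m, n, rfl, -⟩ := hx
    positivity
  -- lower bound
  have hL : ∀ k : ℕ, 2 * s * Real.sqrt ((k:ℝ) + 1) - c ≤ p k := by
    intro k
    rw [hp k]
    apply le_csInf (hne k)
    rintro x ⟨m, n, rfl, hmn⟩
    have hmn' : ((k:ℝ) + 1) ≤ ((m:ℝ) + 1) * ((n:ℝ) + 1) := by exact_mod_cast hmn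
    have key : 2 * Real.sqrt ((a * ((m:ℝ)+1)) * (b * ((n:ℝ)+1)))
        ≤ a * ((m:ℝ)+1) + b * ((n:ℝ)+1) :=
      two_sqrt_mul_le (by positivity) (by positivity)
    have h1 : 2 * s * Real.sqrt ((k:ℝ) + 1)
        ≤ 2 * Real.sqrt ((a * ((m:ℝ)+1)) * (b * ((n:ℝ)+1))) := by
      have : s * Real.sqrt ((k:ℝ) + 1) = Real.sqrt (a * b * ((k:ℝ)+1)) := by
        rw [hs, ← Real.sqrt_mul hab]
      rw [mul_assoc, this]
      have hle : a * b * ((k:ℝ)+1) ≤ (a * ((m:ℝ)+1)) * (b * ((n:ℝ)+1)) := by nlinarith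
      nlinarith [Real.sqrt_le_sqrt hle]
    have : 2 * s * Real.sqrt ((k:ℝ) + 1) ≤ a * ((m:ℝ)+1) + b * ((n:ℝ)+1) :=
      h1.trans key
    simp only [hc]
    push_cast
    linarith
  -- upper bound
  have hU : ∀ k : ℕ, p k ≤ 2 * s * Real.sqrt ((k:ℝ) + 1) + c := by
    intro k
    set u := Real.sqrt (b * ((k:ℝ)+1) / a) with hu
    set v := Real.sqrt (a * ((k:ℝ)+1) / b) with hv
    have hu0 : 0 ≤ u := Real.sqrt_nonneg _
    have hv0 : 0 ≤ v := Real.sqrt_nonneg _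
    set m := ⌈u⌉₊ with hm
    set n := ⌈v⌉₊ with hn
    have huv : u * v = (k:ℝ) + 1 := by
      rw [hu, hv, ← Real.sqrt_mul (by positivity),
        show b * ((k:ℝ)+1) / a * (a * ((k:ℝ)+1) / b) = ((k:ℝ)+1) ^ 2 by
          field_simp]
      exact Real.sqrt_sq (by positivity)
    have hmu : u ≤ (m:ℝ) := Nat.le_ceil u
    have hnv : v ≤ (n:ℝ) := Nat.le_ceil v
    have hmem : k + 1 ≤ (m + 1) * (n + 1) := by
      have h1 : ((k:ℝ) + 1) ≤ (m:ℝ) * n := by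
        calc ((k:ℝ)+1) = u * v := huv.symm
          _ ≤ (m:ℝ) * n := by
              exact mul_le_mul hmu hnv hv0 (by positivity)
      have h2 : (m:ℝ) * n ≤ ((m:ℝ)+1) * ((n:ℝ)+1) := by
        nlinarith [Nat.cast_nonneg (α := ℝ) m, Nat.cast_nonneg (α := ℝ) n]
      exact_mod_cast h1.trans h2
    have hle : p k ≤ a * m + b * n := by
      rw [hp k]; exact csInf_le (hbdd k) ⟨m, n, rfl, hmem⟩
    have hmu1 : (m:ℝ) ≤ u + 1 := le_of_lt (Nat.ceil_lt_add_one hu0)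
    have hnv1 : (n:ℝ) ≤ v + 1 := le_of_lt (Nat.ceil_lt_add_one hv0)
    have hau : a * u = s * Real.sqrt ((k:ℝ)+1) := by
      rw [hu, show b * ((k:ℝ)+1) / a = a⁻¹ ^ 2 * (a * b * ((k:ℝ)+1)) by
          field_simp, Real.sqrt_mul (sq_nonneg _),
        Real.sqrt_sq (by positivity), hs, Real.sqrt_mul hab]
      field_simp
    have hbv : b * v = s * Real.sqrt ((k:ℝ)+1) := by
      rw [hv, show a * ((k:ℝ)+1) / b = b⁻¹ ^ 2 * (a * b * ((k:ℝ)+1)) by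
          field_simp, Real.sqrt_mul (sq_nonneg _),
        Real.sqrt_sq (by positivity), hs, Real.sqrt_mul hab]
      field_simp
    calc p k ≤ a * m + b * n := hle
      _ ≤ a * (u + 1) + b * (v + 1) := by
          have := mul_le_mul_of_nonneg_left hmu1 ha.le
          have := mul_le_mul_of_nonneg_left hnv1 hb.le
          linarith
      _ = 2 * s * Real.sqrt ((k:ℝ)+1) + c := by
          have : a * (u + 1) + b * (v + 1) = a * u + b * v + (a + b) := by ring
          rw [this, hau, hbv, hc]; ring
  -- the limits of the bounding sequences
  have hdivc : ∀ d : ℝ, Tendsto (fun k : ℕ => d / Real.sqrt k) atTop (nhds 0) :=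
    fun d => Tendsto.div_atTop tendsto_const_nhds sqrt_nat_atTop
  have hUlim : Tendsto (fun k : ℕ => (2 * s * Real.sqrt ((k:ℝ)+1) + c) / Real.sqrt k)
      atTop (nhds (2 * s)) := by
    have h := (ratio_sqrt_lim.const_mul (2 * s)).add (hdivc c)
    rw [show 2 * s * 1 + 0 = 2 * s by ring] at h
    exact h.congr (fun k => by ring)
  have hLlim : Tendsto (fun k : ℕ => (2 * s * Real.sqrt ((k:ℝ)+1) - c) / Real.sqrt k)
      atTop (nhds (2 * s)) := by
    have h := (ratio_sqrt_lim.const_mul (2 * s)).sub (hdivc c)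
    rw [show 2 * s * 1 - 0 = 2 * s by ring] at h
    exact h.congr (fun k => by ring)
  -- squeeze
  have hp0 : ∀ k, 0 ≤ p k := by
    intro k
    rw [hp k]
    apply le_csInf (hne k)
    rintro x ⟨m, n, rfl, -⟩
    positivity
  have hQ : Tendsto (fun k : ℕ => p k / Real.sqrt k) atTop (nhds (2 * s)) := by
    apply tendsto_of_tendsto_of_tendsto_of_le_of_le' hLlim hUlim
    · filter_upwards [eventually_ge_atTop 1] with k hk
      have hk0 : (0:ℝ) < Real.sqrt k := Real.sqrt_pos.2 (by exact_mod_cast hk)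
      exact div_le_div_of_nonneg_right (hL k) hk0.le
    · filter_upwards [eventually_ge_atTop 1] with k hk
      have hk0 : (0:ℝ) < Real.sqrt k := Real.sqrt_pos.2 (by exact_mod_cast hk)
      exact div_le_div_of_nonneg_right (hU k) hk0.le
  have hfin := hQ.pow 2
  rw [show (2 * s) ^ 2 = 4 * a * b by rw [mul_pow]; rw [hs2]; ring] at hfin
  apply hfin.congr'
  filter_upwards [eventually_ge_atTop 1] with k hk
  have hk0 : (0:ℝ) < k := by exact_mod_cast hk
  rw [div_pow, Real.sq_sqrt hk0.le]
end

section
/- For every real number a with 1 ≤ a ≤ 3, min { a·m + n | (m,n) ∈ ℕ×ℕ, (m+1)(n+1) ≥ 28 } = 3a + 6. (This is the computation g_6(a) = (3a+6)/6 for 1 ≤ a ≤ 3, which yields the lower bound g(a) ≥ 1 + a/2 for 2 ≤ a ≤ 3 on the polydisk-into-ball embedding problem.) -/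
/-- The computation `g_6(a) = (3a+6)/6` for `1 ≤ a ≤ 3`:
`min { a·m + n | (m,n) ∈ ℕ×ℕ, (m+1)(n+1) ≥ 28 } = 3a + 6`. -/
theorem g_six_low (a : ℝ) (ha1 : 1 ≤ a) (ha3 : a ≤ 3) :
    sInf {x : ℝ | ∃ m n : ℕ, x = a * m + n ∧ 28 ≤ (m + 1) * (n + 1)} = 3 * a + 6 := by
  have hlb : ∀ x ∈ {x : ℝ | ∃ m n : ℕ, x = a * m + n ∧ 28 ≤ (m + 1) * (n + 1)},
      3 * a + 6 ≤ x := by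
    rintro x ⟨m, n, rfl, h⟩
    rcases le_or_gt 9 m with hm | hm
    · have hm' : (9 : ℝ) ≤ (m : ℝ) := by exact_mod_cast hm
      nlinarith [Nat.cast_nonneg (α := ℝ) n]
    · interval_cases m
      · have hn : (27:ℝ) ≤ n := by exact_mod_cast (show 27 ≤ n by omega)
        push_cast; nlinarith
      · have hn : (13:ℝ) ≤ n := by exact_mod_cast (show 13 ≤ n by omega)
        push_cast; nlinarith
      · have hn : (9:ℝ) ≤ n := by exact_mod_cast (show 9 ≤ n by omega)
        push_cast; nlinarith
      · have hn : (6:ℝ) ≤ n := by exact_mod_cast (show 6 ≤ n by omega)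
        push_cast; nlinarith
      · have hn : (5:ℝ) ≤ n := by exact_mod_cast (show 5 ≤ n by omega)
        push_cast; nlinarith
      · have hn : (4:ℝ) ≤ n := by exact_mod_cast (show 4 ≤ n by omega)
        push_cast; nlinarith
      · have hn : (3:ℝ) ≤ n := by exact_mod_cast (show 3 ≤ n by omega)
        push_cast; nlinarith
      · have hn : (3:ℝ) ≤ n := by exact_mod_cast (show 3 ≤ n by omega)
        push_cast; nlinarith
      · have hn : (3:ℝ) ≤ n := by exact_mod_cast (show 3 ≤ n by omega)
        push_cast; nlinarith
  apply le_antisymm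
  · apply csInf_le ⟨3 * a + 6, hlb⟩
    refine ⟨3, 6, by push_cast; ring, by norm_num⟩
  · exact le_csInf ⟨a * 3 + 6, 3, 6, by norm_num, by norm_num⟩ hlb
end

section
/- For every real number a with 3 ≤ a ≤ 4, min { a·m + n | (m,n) ∈ ℕ×ℕ, (m+1)(n+1) ≥ 28 } = 2a + 9. (This is the computation g_6(a) = (2a+9)/6 for 3 ≤ a ≤ 4, which yields the lower bound g(a) ≥ 3/2 + a/3 for 3 ≤ a ≤ 4 on the polydisk-into-ball embedding problem.) -/
/-- The computation `g_6(a) = (2a+9)/6` for `3 ≤ a ≤ 4`: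
`min { a·m + n | (m,n) ∈ ℕ×ℕ, (m+1)(n+1) ≥ 28 } = 2a + 9`. -/
theorem g_six_high (a : ℝ) (ha3 : 3 ≤ a) (ha4 : a ≤ 4) :
    sInf {x : ℝ | ∃ m n : ℕ, x = a * m + n ∧ 28 ≤ (m + 1) * (n + 1)} = 2 * a + 9 := by
  have hlb : ∀ x ∈ {x : ℝ | ∃ m n : ℕ, x = a * m + n ∧ 28 ≤ (m + 1) * (n + 1)},
      2 * a + 9 ≤ x := by
    rintro x ⟨m, n, rfl, h⟩
    by_cases hm : m ≤ 5
    · interval_cases m <;>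
        (first
          | have hn : 27 ≤ n := by omega
          | have hn : 13 ≤ n := by omega
          | have hn : 9 ≤ n := by omega
          | have hn : 6 ≤ n := by omega
          | have hn : 5 ≤ n := by omega
          | have hn : 4 ≤ n := by omega) <;>
        (have hn' := (Nat.cast_le (α := ℝ)).2 hn
         push_cast at hn' ⊢
         nlinarith)
    · push_neg at hm
      have hm' : (6 : ℝ) ≤ (m : ℝ) := by exact_mod_cast hm
      have hn : (0 : ℝ) ≤ (n : ℝ) := Nat.cast_nonneg n
      nlinarith
  apply le_antisymm
  · apply csInf_le ⟨2 * a + 9, hlb⟩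
    exact ⟨2, 9, by push_cast; ring, by norm_num⟩
  · exact le_csInf ⟨2 * a + 9, 2, 9, by push_cast; ring, by norm_num⟩ hlb
end

section
/- For every real number a > 0, sup_{d ≥ 1} (1/d) · min { a·m + n | (m,n) ∈ ℕ×ℕ, 2(m+1)(n+1) ≥ (d+1)(d+2) } ≥ √(2a). (This says that the ECH obstruction to embedding the polydisk P(a,1) into a ball is always at least as strong as the volume obstruction.) -/
lemma key_bound (a : ℝ) (ha : 0 < a) (d m n : ℕ)
    (h : (d + 1) * (d + 2) ≤ 2 * ((m + 1) * (n + 1))) :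
    Real.sqrt (2 * a) * d - (a + 1) ≤ a * m + n := by
  have h' : ((d:ℝ) + 1) * ((d:ℝ) + 2) ≤ 2 * (((m:ℝ) + 1) * ((n:ℝ) + 1)) := by
    exact_mod_cast h
  have hx : (0:ℝ) ≤ a * ((m:ℝ) + 1) := by positivity
  have hy : (0:ℝ) ≤ ((n:ℝ) + 1) := by positivity
  have h1 : Real.sqrt (2 * a) * d = Real.sqrt (2 * a * (d:ℝ)^2) := by
    rw [show 2 * a * (d:ℝ)^2 = (Real.sqrt (2*a) * d)^2 by
      rw [mul_pow, Real.sq_sqrt (by positivity)], Real.sqrt_sq (by positivity)]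
  have h2 : Real.sqrt (2 * a * (d:ℝ)^2) ≤ Real.sqrt (4 * (a * ((m:ℝ)+1) * ((n:ℝ)+1))) := by
    apply Real.sqrt_le_sqrt
    nlinarith [Nat.cast_nonneg (α := ℝ) d]
  have h3 : Real.sqrt (4 * (a * ((m:ℝ)+1) * ((n:ℝ)+1))) =
      2 * Real.sqrt (a * ((m:ℝ)+1) * ((n:ℝ)+1)) := by
    rw [show (4:ℝ) * (a * ((m:ℝ)+1) * ((n:ℝ)+1)) =
        (2 * Real.sqrt (a * ((m:ℝ)+1) * ((n:ℝ)+1)))^2 by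
      rw [mul_pow, Real.sq_sqrt (by positivity)]; ring, Real.sqrt_sq (by positivity)]
  have hsplit := Real.sqrt_mul hx ((n:ℝ)+1)
  have h4 : 2 * Real.sqrt (a * ((m:ℝ)+1) * ((n:ℝ)+1)) ≤ a * ((m:ℝ)+1) + ((n:ℝ)+1) := by
    nlinarith [sq_nonneg (Real.sqrt (a*((m:ℝ)+1)) - Real.sqrt ((n:ℝ)+1)),
      Real.sq_sqrt hx, Real.sq_sqrt hy]
  nlinarith [h1, h2, h3, h4]

/-- The ECH obstruction to embedding the polydisk `P(a,1)` into a ball is at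
least as strong as the volume obstruction:
`sup_{d ≥ 1} (1/d) · min { a·m + n | 2(m+1)(n+1) ≥ (d+1)(d+2) } ≥ √(2a)`,
read as: for every `ε > 0` there exists `d ≥ 1` with
`(1/d) · min{…} > √(2a) − ε`. -/
theorem polydisk_ball_volume_bound (a : ℝ) (ha : 0 < a) :
    ∀ ε : ℝ, 0 < ε → ∃ d : ℕ, 1 ≤ d ∧
      Real.sqrt (2 * a) - ε <
        (1 / (d : ℝ)) *
          sInf {x : ℝ | ∃ m n : ℕ, x = a * m + n ∧
            (d + 1) * (d + 2) ≤ 2 * ((m + 1) * (n + 1))} := by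
  intro ε hε
  set d : ℕ := ⌈(a + 1) / ε⌉₊ + 1 with hd_def
  refine ⟨d, Nat.le_add_left 1 _, ?_⟩
  have hd1 : (1:ℝ) ≤ (d:ℝ) := by exact_mod_cast Nat.le_add_left 1 _
  have hdpos : (0:ℝ) < (d:ℝ) := by linarith
  have hdd : (a + 1) / ε < (d:ℝ) := by
    calc (a + 1) / ε ≤ (⌈(a + 1) / ε⌉₊ : ℝ) := Nat.le_ceil _
    _ < (d:ℝ) := by rw [hd_def]; push_cast; linarith
  have haε : a + 1 < ε * d := by
    rw [div_lt_iff₀ hε] at hdd; linarith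
  set S : Set ℝ := {x : ℝ | ∃ m n : ℕ, x = a * m + n ∧
      (d + 1) * (d + 2) ≤ 2 * ((m + 1) * (n + 1))} with hS
  have hne : S.Nonempty := by
    refine ⟨a * ((0:ℕ):ℝ) + (((d+1)*(d+2) : ℕ):ℝ), 0, (d+1)*(d+2), rfl, ?_⟩
    nlinarith [Nat.zero_le ((d+1)*(d+2))]
  have hlb : Real.sqrt (2 * a) * d - (a + 1) ≤ sInf S := by
    apply le_csInf hne
    rintro x ⟨m, n, rfl, h⟩
    exact key_bound a ha d m n h
  have hmul : Real.sqrt (2*a) - (a+1)/d ≤ (1/(d:ℝ)) * sInf S := by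
    rw [show Real.sqrt (2*a) - (a+1)/d = (1/(d:ℝ)) * (Real.sqrt (2*a) * d - (a+1)) by
      field_simp]
    exact mul_le_mul_of_nonneg_left hlb (by positivity)
  have hlt : Real.sqrt (2*a) - ε < Real.sqrt (2*a) - (a+1)/d := by
    have : (a+1)/d < ε := (div_lt_iff₀ hdpos).mpr (by linarith)
    linarith
  linarith
end

section
/- Let n be a positive integer and let a_1, …, a_n be positive real numbers. Suppose that for every tuple (d_1, …, d_n, d) of nonnegative integers, not all zero, satisfying Σ_{i=1}^n (d_i² + d_i) ≤ d² + 3d, one has Σ_{i=1}^n d_i·a_i < d. Then Σ_{i=1}^n a_i² ≤ 1. (This says that the ECH ball-packing inequalities imply the volume constraint: if the packing inequalities hold for a disjoint union of balls B(a_i) inside B(1), then the total volume of the balls B(a_i) is at most that of B(1).) -/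
open Finset

set_option maxHeartbeats 1600000 in
/-- The ECH ball-packing inequalities imply the volume constraint: if for every
tuple `(d_1,…,d_n,d)` of nonnegative integers, not all zero, with
`Σ (d_i² + d_i) ≤ d² + 3d`, one has `Σ d_i·a_i < d`, then `Σ a_i² ≤ 1`. -/
theorem packing_implies_volume (n : ℕ) (hn : 0 < n) (a : Fin n → ℝ)
    (ha : ∀ i, 0 < a i)
    (hpack : ∀ (d' : Fin n → ℕ) (d : ℕ), ¬(d = 0 ∧ ∀ i, d' i = 0) →
      (∑ i, ((d' i) ^ 2 + d' i)) ≤ d ^ 2 + 3 * d →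
      (∑ i, (d' i : ℝ) * a i) < d) :
    (∑ i, (a i) ^ 2) ≤ 1 := by
  by_contra h
  push_neg at h
  have hS1 : 1 < ∑ i, (a i) ^ 2 := h
  set S : ℝ := ∑ i, (a i) ^ 2 with hSdef
  have hS0 : 0 < S := lt_trans one_pos hS1
  have hsq1 : 1 < Real.sqrt S := by
    rw [show (1:ℝ) = Real.sqrt 1 by simp]
    exact Real.sqrt_lt_sqrt (by norm_num) hS1
  have hsqS : Real.sqrt S < S := by
    nlinarith [Real.sq_sqrt hS0.le, hsq1]
  obtain ⟨r, hsqr, hrS⟩ : ∃ r : ℝ, Real.sqrt S < r ∧ r < S :=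
    ⟨(Real.sqrt S + S) / 2, by linarith, by linarith⟩
  have hr1 : 1 < r := lt_trans hsq1 hsqr
  have hr0 : 0 < r := lt_trans one_pos hr1
  have hr2 : S < r ^ 2 := by
    nlinarith [Real.sq_sqrt hS0.le, Real.sqrt_nonneg S]
  set A : ℝ := ∑ i, a i with hAdef
  have : Nonempty (Fin n) := ⟨⟨0, hn⟩⟩
  have hA0 : 0 < A := Finset.sum_pos (fun i _ => ha i) Finset.univ_nonempty
  clear_value S A
  obtain ⟨d, hd⟩ := exists_nat_gt (max (A * r / (S - r)) (A * r / (r ^ 2 - S)))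
  have hd1 : A * r / (S - r) < (d : ℝ) := lt_of_le_of_lt (le_max_left _ _) hd
  have hd2 : A * r / (r ^ 2 - S) < (d : ℝ) := lt_of_le_of_lt (le_max_right _ _) hd
  have hSr : 0 < S - r := by linarith
  have hr2S : 0 < r ^ 2 - S := by linarith
  have hd1' : A * r ≤ (d : ℝ) * (S - r) := by
    rw [div_lt_iff₀ hSr] at hd1; linarith
  have hd2' : A * r ≤ (d : ℝ) * (r ^ 2 - S) := by
    rw [div_lt_iff₀ hr2S] at hd2; linarith
  have hdpos : 0 < (d : ℝ) := by
    have : 0 < A * r / (S - r) := div_pos (mul_pos hA0 hr0) hSr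
    linarith
  have hd0 : d ≠ 0 := by
    intro h0; rw [h0] at hdpos; simp at hdpos
  set d' : Fin n → ℕ := fun i => ⌊(d : ℝ) * a i / r⌋₊ with hd'def
  have hle : ∀ i, (d' i : ℝ) ≤ (d : ℝ) * a i / r := fun i =>
    Nat.floor_le (div_nonneg (mul_nonneg (Nat.cast_nonneg d) (ha i).le) hr0.le)
  have hgt : ∀ i, (d : ℝ) * a i / r - 1 ≤ (d' i : ℝ) := fun i => by
    have := Nat.lt_floor_add_one ((d : ℝ) * a i / r)
    linarith
  clear_value d'
  -- the index constraint
  have hcons : (∑ i, ((d' i) ^ 2 + d' i)) ≤ d ^ 2 + 3 * d := by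
    have hreal : ((∑ i, ((d' i) ^ 2 + d' i) : ℕ) : ℝ) ≤ ((d ^ 2 + 3 * d : ℕ) : ℝ) := by
      push_cast
      have step1 : ∑ i, (((d' i : ℝ)) ^ 2 + (d' i : ℝ)) ≤
          ∑ i, (((d : ℝ) * a i / r) ^ 2 + (d : ℝ) * a i / r) := by
        apply Finset.sum_le_sum
        intro i _
        have h1 := hle i
        have h2 : (0:ℝ) ≤ (d' i : ℝ) := Nat.cast_nonneg _
        nlinarith
      have step2 : ∑ i, (((d : ℝ) * a i / r) ^ 2 + (d : ℝ) * a i / r) =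
          ((d : ℝ) / r) ^ 2 * S + ((d : ℝ) / r) * A := by
        rw [hSdef, hAdef, Finset.mul_sum, Finset.mul_sum, ← Finset.sum_add_distrib]
        apply Finset.sum_congr rfl
        intro i _
        ring
      have step3 : ((d : ℝ) / r) ^ 2 * S + ((d : ℝ) / r) * A ≤ (d : ℝ) ^ 2 + 3 * d := by
        have hr2pos : (0:ℝ) < r ^ 2 := pow_pos hr0 2
        have hrne : r ≠ 0 := ne_of_gt hr0
        have key : (d:ℝ) ^ 2 * S + (d:ℝ) * (A * r) ≤ (d:ℝ) ^ 2 * r ^ 2 := by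
          nlinarith [mul_le_mul_of_nonneg_left hd2' hdpos.le]
        have e : ((d:ℝ)/r) ^ 2 * S + ((d:ℝ)/r) * A = ((d:ℝ)^2 * S + (d:ℝ)*(A*r))/r^2 := by
          rw [eq_div_iff (ne_of_gt hr2pos)]
          field_simp
        rw [e, div_le_iff₀ hr2pos]
        nlinarith [key, hdpos.le]
      calc ∑ i, (((d' i : ℝ)) ^ 2 + (d' i : ℝ)) ≤ _ := step1
        _ = _ := step2
        _ ≤ _ := step3
    exact_mod_cast hreal
  have hlt := hpack d' d (by rintro ⟨h1, _⟩; exact hd0 h1) hcons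
  have hge : (d : ℝ) ≤ ∑ i, (d' i : ℝ) * a i := by
    have e1 : ∑ i, ((d : ℝ) * a i / r - 1) * a i = ((d : ℝ) / r) * S - A := by
      rw [hSdef, hAdef, Finset.mul_sum, ← Finset.sum_sub_distrib]
      apply Finset.sum_congr rfl
      intro i _
      ring
    have e2 : ∑ i, ((d : ℝ) * a i / r - 1) * a i ≤ ∑ i, (d' i : ℝ) * a i := by
      apply Finset.sum_le_sum
      intro i _
      exact mul_le_mul_of_nonneg_right (hgt i) (ha i).le
    have e3 : (d : ℝ) ≤ ((d : ℝ) / r) * S - A := by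
      have hrne : r ≠ 0 := ne_of_gt hr0
      have e : ((d:ℝ)/r) * S - A = ((d:ℝ) * S - A * r)/r := by
        rw [eq_div_iff hrne]
        field_simp
      rw [e, le_div_iff₀ hr0]
      nlinarith [hd1']
    linarith
  linarith
end

section
/- Let n be a positive integer and let v_1, …, v_n be nonnegative real numbers. For each positive integer k define M(k) := max { Σ_{i=1}^n √(k_i · v_i) | (k_1,…,k_n) ∈ ℕⁿ, Σ_{i=1}^n k_i = k }. Then lim_{k→∞} M(k)/√k = √(Σ_{i=1}^n v_i). (This is the computation showing that the volume conjecture for ECH capacities is preserved under disjoint unions.) -/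
open Filter

lemma sqrt_add_le_aux {a b : ℝ} (ha : 0 ≤ a) (hb : 0 ≤ b) :
    Real.sqrt (a + b) ≤ Real.sqrt a + Real.sqrt b := by
  have h : a + b ≤ (Real.sqrt a + Real.sqrt b) ^ 2 := by
    rw [add_sq, Real.sq_sqrt ha, Real.sq_sqrt hb]
    nlinarith [Real.sqrt_nonneg a, Real.sqrt_nonneg b]
  calc Real.sqrt (a + b) ≤ Real.sqrt ((Real.sqrt a + Real.sqrt b) ^ 2) :=
        Real.sqrt_le_sqrt h
    _ = _ := Real.sqrt_sq (by positivity)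

/-- The volume conjecture for ECH capacities is preserved under disjoint
unions: with `M(k) = max { Σ √(k_i v_i) | Σ k_i = k }`, one has
`lim_{k→∞} M(k)/√k = √(Σ v_i)`. -/
theorem disjoint_union_volume (n : ℕ) (hn : 0 < n) (v : Fin n → ℝ)
    (hv : ∀ i, 0 ≤ v i) (M : ℕ → ℝ)
    (hM : ∀ k : ℕ, 0 < k → M k =
      sSup {x : ℝ | ∃ κ : Fin n → ℕ, (∑ i, κ i) = k ∧
        x = ∑ i, Real.sqrt ((κ i : ℝ) * v i)}) :
    Tendsto (fun k : ℕ => M k / Real.sqrt k) atTop (nhds (Real.sqrt (∑ i, v i))) := by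
  classical
  set V : ℝ := ∑ i, v i with hVdef
  have hV0 : 0 ≤ V := Finset.sum_nonneg fun i _ => hv i
  -- upper bound for every admissible tuple, by Cauchy–Schwarz
  have hub : ∀ (k : ℕ) (κ : Fin n → ℕ), (∑ i, κ i) = k →
      (∑ i, Real.sqrt ((κ i : ℝ) * v i)) ≤ Real.sqrt k * Real.sqrt V := by
    intro k κ hκ
    have h1 : (∑ i, Real.sqrt ((κ i : ℝ) * v i))
        = ∑ i, Real.sqrt (κ i : ℝ) * Real.sqrt (v i) := by
      refine Finset.sum_congr rfl fun i _ => ?_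
      exact Real.sqrt_mul (by positivity) _
    rw [h1]
    have h2 := Real.sum_sqrt_mul_sqrt_le (f := fun i => ((κ i : ℝ)))
      (g := v) Finset.univ (fun i => by positivity) (fun i => hv i)
    have h3 : (∑ i, ((κ i : ℝ))) = (k : ℝ) := by
      rw [← Nat.cast_sum, hκ]
    rwa [h3] at h2
  -- nonemptiness of the competitor set
  have hmem : ∀ k : ℕ, ∃ κ : Fin n → ℕ, (∑ i, κ i) = k := by
    intro k
    refine ⟨fun i => if i = ⟨0, hn⟩ then k else 0, ?_⟩
    simp
  -- the set is bounded above
  have hbdd : ∀ k : ℕ, BddAbove {x : ℝ | ∃ κ : Fin n → ℕ, (∑ i, κ i) = k ∧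
      x = ∑ i, Real.sqrt ((κ i : ℝ) * v i)} := by
    intro k
    refine ⟨Real.sqrt k * Real.sqrt V, ?_⟩
    rintro x ⟨κ, hκ, rfl⟩
    exact hub k κ hκ
  -- M k ≤ √k √V for k > 0
  have hMle : ∀ k : ℕ, 0 < k → M k ≤ Real.sqrt k * Real.sqrt V := by
    intro k hk
    rw [hM k hk]
    apply csSup_le
    · obtain ⟨κ, hκ⟩ := hmem k
      exact ⟨_, κ, hκ, rfl⟩
    · rintro x ⟨κ, hκ, rfl⟩
      exact hub k κ hκ
  -- M k ≥ each competitor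
  have hMge : ∀ k : ℕ, 0 < k → ∀ κ : Fin n → ℕ, (∑ i, κ i) = k →
      (∑ i, Real.sqrt ((κ i : ℝ) * v i)) ≤ M k := by
    intro k hk κ hκ
    rw [hM k hk]
    exact le_csSup (hbdd k) ⟨κ, hκ, rfl⟩
  rcases eq_or_lt_of_le hV0 with hV | hV
  · -- V = 0 : all v i = 0
    have hvz : ∀ i, v i = 0 := by
      intro i
      have := (Finset.sum_eq_zero_iff_of_nonneg (fun i _ => hv i)).1 hV.symm
      exact this i (Finset.mem_univ i)
    have hM0 : ∀ k : ℕ, 0 < k → M k = 0 := by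
      intro k hk
      have h1 := hMle k hk
      have h2 : (0 : ℝ) ≤ M k := by
        obtain ⟨κ, hκ⟩ := hmem k
        have := hMge k hk κ hκ
        simpa [hvz] using this
      rw [← hV] at h1
      simp only [Real.sqrt_zero, mul_zero] at h1
      linarith
    have : Tendsto (fun _ : ℕ => (0 : ℝ)) atTop (nhds (Real.sqrt V)) := by
      rw [← hV, Real.sqrt_zero]; exact tendsto_const_nhds
    refine this.congr' ?_
    filter_upwards [eventually_gt_atTop 0] with k hk
    rw [hM0 k hk, zero_div]
  · -- V > 0 : squeeze
    set C : ℝ := ∑ i, Real.sqrt (v i) with hCdef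
    have hC0 : 0 ≤ C := Finset.sum_nonneg fun i _ => Real.sqrt_nonneg _
    -- lower bound : M k ≥ √k √V - C
    have hlow : ∀ k : ℕ, 0 < k → Real.sqrt k * Real.sqrt V - C ≤ M k := by
      intro k hk
      set κ : Fin n → ℕ := fun i => ⌊(k : ℝ) * v i / V⌋₊ with hκdef
      have hsle : (∑ i, κ i) ≤ k := by
        have h1 : ((∑ i, κ i : ℕ) : ℝ) ≤ (k : ℝ) := by
          rw [Nat.cast_sum]
          calc (∑ i, ((κ i : ℝ)))
              ≤ ∑ i, (k : ℝ) * v i / V :=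
                Finset.sum_le_sum fun i _ => Nat.floor_le (div_nonneg (mul_nonneg (Nat.cast_nonneg k) (hv i)) hV0)
            _ = (k : ℝ) * V / V := by rw [← Finset.sum_div, ← Finset.mul_sum]
            _ = (k : ℝ) := by field_simp
        exact_mod_cast h1
      set κ' : Fin n → ℕ := fun i => κ i + (if i = ⟨0, hn⟩ then k - ∑ j, κ j else 0)
        with hκ'def
      have hκ'sum : (∑ i, κ' i) = k := by
        simp only [hκ'def, Finset.sum_add_distrib]
        rw [Finset.sum_ite_eq' Finset.univ (⟨0, hn⟩ : Fin n)]
        simp [Nat.add_sub_cancel' hsle]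
      have hstep1 : (∑ i, Real.sqrt ((κ i : ℝ) * v i)) ≤
          ∑ i, Real.sqrt ((κ' i : ℝ) * v i) := by
        refine Finset.sum_le_sum fun i _ => Real.sqrt_le_sqrt ?_
        have : (κ i : ℝ) ≤ (κ' i : ℝ) := by
          exact_mod_cast Nat.le_add_right _ _
        exact mul_le_mul_of_nonneg_right this (hv i)
      have hstep2 : Real.sqrt k * Real.sqrt V - C ≤
          ∑ i, Real.sqrt ((κ i : ℝ) * v i) := by
        have key : ∀ i : Fin n,
            Real.sqrt (((k : ℝ) * v i / V) * v i) - Real.sqrt (v i)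
              ≤ Real.sqrt ((κ i : ℝ) * v i) := by
          intro i
          have h1 : ((k : ℝ) * v i / V) * v i ≤ (κ i : ℝ) * v i + v i := by
            have h2 : (k : ℝ) * v i / V ≤ (κ i : ℝ) + 1 :=
              (Nat.lt_floor_add_one _).le
            nlinarith [hv i]
          have h3 : Real.sqrt (((k : ℝ) * v i / V) * v i)
              ≤ Real.sqrt ((κ i : ℝ) * v i) + Real.sqrt (v i) :=
            (Real.sqrt_le_sqrt h1).trans (sqrt_add_le_aux (mul_nonneg (by positivity) (hv i)) (hv i))
          linarith
        have hsum : (∑ i, (Real.sqrt (((k : ℝ) * v i / V) * v i) - Real.sqrt (v i)))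
            ≤ ∑ i, Real.sqrt ((κ i : ℝ) * v i) :=
          Finset.sum_le_sum fun i _ => key i
        have heq : (∑ i, Real.sqrt (((k : ℝ) * v i / V) * v i))
            = Real.sqrt k * Real.sqrt V := by
          have h4 : ∀ i : Fin n, Real.sqrt (((k : ℝ) * v i / V) * v i)
              = Real.sqrt ((k : ℝ) / V) * v i := by
            intro i
            rw [show ((k : ℝ) * v i / V) * v i = ((k : ℝ) / V) * (v i * v i) by ring,
              Real.sqrt_mul (by positivity), Real.sqrt_mul_self (hv i)]
          rw [Finset.sum_congr rfl fun i _ => h4 i, ← Finset.mul_sum, ← hVdef,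
            Real.sqrt_div (by positivity : (0:ℝ) ≤ (k:ℝ)) V,
            div_mul_eq_mul_div, mul_div_assoc, Real.div_sqrt]
        rw [Finset.sum_sub_distrib, heq, ← hCdef] at hsum
        exact hsum
      exact le_trans (le_trans hstep2 hstep1) (hMge k hk κ' hκ'sum)
    -- Now the squeeze
    have hsq : Tendsto (fun k : ℕ => Real.sqrt V - C / Real.sqrt k) atTop
        (nhds (Real.sqrt V)) := by
      have h0 : Tendsto (fun k : ℕ => C / Real.sqrt k) atTop (nhds 0) := by
        have h1 : Tendsto (fun k : ℕ => Real.sqrt (1 / (k : ℝ))) atTop (nhds 0) := by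
          have h2 : Tendsto (fun k : ℕ => (1 : ℝ) / (k : ℝ)) atTop (nhds 0) :=
            tendsto_one_div_atTop_nhds_zero_nat
          have h3 := (Real.continuous_sqrt.tendsto 0).comp h2
          rw [Real.sqrt_zero] at h3
          exact h3
        have h4 : (fun k : ℕ => C / Real.sqrt k)
            = fun k : ℕ => C * Real.sqrt (1 / (k : ℝ)) := by
          funext k
          rw [one_div, Real.sqrt_inv, div_eq_mul_inv]
        rw [h4]
        simpa using h1.const_mul C
      have := (tendsto_const_nhds (x := Real.sqrt V) (f := (atTop : Filter ℕ))).sub h0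
      simpa using this
    refine tendsto_of_tendsto_of_tendsto_of_le_of_le' hsq tendsto_const_nhds ?_ ?_
    · filter_upwards [eventually_gt_atTop 0] with k hk
      have hk' : (0 : ℝ) < Real.sqrt k := Real.sqrt_pos.2 (by exact_mod_cast hk)
      have heq : (Real.sqrt k * Real.sqrt V - C) / Real.sqrt k
          = Real.sqrt V - C / Real.sqrt k := by
        rw [sub_div, mul_comm, mul_div_assoc, div_self hk'.ne', mul_one]
      rw [← heq]
      gcongr
      exact hlow k hk
    · filter_upwards [eventually_gt_atTop 0] with k hk
      have hk' : (0 : ℝ) < Real.sqrt k := Real.sqrt_pos.2 (by exact_mod_cast hk)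
      rw [div_le_iff₀ hk', mul_comm]
      exact hMle k hk
end
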